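/- arXiv:1704.02859 — 10 statements merged into one kernel-verified Lean document; each statement's English description precedes it below -/
import Mathlib

section
/- For all nonzero reals a, b, c, x and every positive integer k, with [t] = t - 1/t and ⟨t⟩ = t + 1/t, one has [a b^{k²+2k} c^{k(k+1)} x^{(k+1)(2k+1)}] - ⟨x⟩·[a b^{k²} c^{k(k-1)} x^{k(2k-1)}] + [a b^{k²} c^{k(k-1)} x^{k(2k-1)+1}] = [(bc)^k x^{2k+1}]·⟨a b^{k(k+1)} c^{k²} x^{k(2k+1)}⟩. -/
theorem spiral_antidiagonal_identity (a b c x : ℝ) (ha : a ≠ 0) (hb : b ≠ 0)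
    (hc : c ≠ 0) (hx : x ≠ 0) (k : ℕ) (hk : 1 ≤ k) :
    (a * b^(k^2+2*k) * c^(k*(k+1)) * x^((k+1)*(2*k+1)) -
       1/(a * b^(k^2+2*k) * c^(k*(k+1)) * x^((k+1)*(2*k+1)))) -
    (x + 1/x) *
    (a * b^(k^2) * c^(k*(k-1)) * x^(k*(2*k-1)) -
       1/(a * b^(k^2) * c^(k*(k-1)) * x^(k*(2*k-1)))) +
    (a * b^(k^2) * c^(k*(k-1)) * x^(k*(2*k-1)+1) -
       1/(a * b^(k^2) * c^(k*(k-1)) * x^(k*(2*k-1)+1))) =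
    ((b*c)^k * x^(2*k+1) - 1/((b*c)^k * x^(2*k+1))) *
    (a * b^(k*(k+1)) * c^(k^2) * x^(k*(2*k+1)) +
       1/(a * b^(k*(k+1)) * c^(k^2) * x^(k*(2*k+1)))) := by
  obtain ⟨n, rfl⟩ := Nat.exists_eq_add_of_le hk
  have e1 : (1+n)-1 = n := by omega
  have e2 : 2*(1+n)-1 = 2*n+1 := by omega
  have h1 : (1+n)^2 + 2*(1+n) = 4*n+3 + n^2 := by ring
  have h2 : (1+n)*((1+n)+1) = 3*n+2 + n^2 := by ring
  have h3 : ((1+n)+1)*(2*(1+n)+1) = 7*n+6 + 2*n^2 := by ring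
  have h4 : (1+n)^2 = 2*n+1 + n^2 := by ring
  have h5 : (1+n)*((1+n)-1) = n + n^2 := by rw [e1]; ring
  have h6 : (1+n)*(2*(1+n)-1) = 3*n+1 + 2*n^2 := by rw [e2]; ring
  have h7 : (1+n)*(2*(1+n)+1) = 5*n+3 + 2*n^2 := by ring
  rw [h1, h2, h3, h4, h5, h6, h7]
  field_simp
  ring
end

section
/- Let f, g : ℝ_{>0} → ℝ be continuous with f not identically zero, satisfying f(a)g(x) = f(ax) + f(a/x) for all positive reals a, x. Then g(y²) = g(y)² - 2 for all y > 0. -/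
theorem g_square_relation (f g : ℝ → ℝ)
    (hf : ContinuousOn f (Set.Ioi 0)) (hg : ContinuousOn g (Set.Ioi 0))
    (hne : ¬ (∀ x : ℝ, 0 < x → f x = 0))
    (heq : ∀ a x : ℝ, 0 < a → 0 < x → f a * g x = f (a*x) + f (a/x)) :
    ∀ y : ℝ, 0 < y → g (y^2) = (g y)^2 - 2 := by
  push_neg at hne
  obtain ⟨a, ha, hfa⟩ := hne
  intro y hy
  have hay : 0 < a * y := by positivity
  have hady : 0 < a / y := by positivity
  have hy2 : 0 < y^2 := by positivity
  have key : f a * (g y)^2 = f a * g (y^2) + 2 * f a := by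
    have h1 := heq a y ha hy
    have h2 := heq (a*y) y hay hy
    have h3 := heq (a/y) y hady hy
    have h4 := heq a (y^2) ha hy2
    have e1 : a * y * y = a * y^2 := by ring
    have e2 : a * y / y = a := by field_simp
    have e3 : a / y * y = a := by field_simp
    have e4 : a / y / y = a / y^2 := by
      rw [div_div]; ring_nf
    have : f a * (g y)^2 = (f (a*y) + f (a/y)) * g y := by
      rw [← h1]; ring
    rw [add_mul, h2, h3, e1, e2, e3, e4] at this
    rw [h4]
    linarith
  have h : f a * g (y^2) = f a * ((g y)^2 - 2) := by linarith
  exact mul_left_cancel₀ hfa h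
end

section
/- Let f, g : ℝ_{>0} → ℝ be continuous with f not identically zero, satisfying f(a)g(x) = f(ax) + f(a/x) for all positive reals a, x. Then g(y³) = g(y)³ - 3g(y) for all y > 0. -/
theorem g_cube_relation (f g : ℝ → ℝ)
    (hf : ContinuousOn f (Set.Ioi 0)) (hg : ContinuousOn g (Set.Ioi 0))
    (hne : ¬ (∀ x : ℝ, 0 < x → f x = 0))
    (heq : ∀ a x : ℝ, 0 < a → 0 < x → f a * g x = f (a*x) + f (a/x)) :
    ∀ y : ℝ, 0 < y → g (y^3) = (g y)^3 - 3 * g y := by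
  push_neg at hne
  obtain ⟨a, ha, hfa⟩ := hne
  have hg1 : g 1 = 2 := by
    have h := heq a 1 ha one_pos
    simp only [mul_one, div_one] at h
    have : f a * g 1 = f a * 2 := by linarith
    exact mul_left_cancel₀ hfa this
  have key : ∀ x y : ℝ, 0 < x → 0 < y → g x * g y = g (x*y) + g (x/y) := by
    intro x y hx hy
    have h1 := heq a x ha hx
    have h2 := heq (a*x) y (mul_pos ha hx) hy
    have h3 := heq (a/x) y (div_pos ha hx) hy
    have h4 := heq a (x*y) ha (mul_pos hx hy)
    have h5 := heq a (x/y) ha (div_pos hx hy)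
    have e1 : a*x*y = a*(x*y) := by ring
    have e2 : a*x/y = a*(x/y) := (mul_div_assoc a x y)
    have e3 : a/x*y = a/(x/y) := by
      rw [div_div_eq_mul_div, div_mul_eq_mul_div]
    have e4 : a/x/y = a/(x*y) := div_div a x y
    rw [e1, e2] at h2
    rw [e3, e4] at h3
    apply mul_left_cancel₀ hfa
    calc f a * (g x * g y) = (f a * g x) * g y := by ring
      _ = (f (a*x) + f (a/x)) * g y := by rw [h1]
      _ = f (a*x) * g y + f (a/x) * g y := by ring
      _ = (f (a*(x*y)) + f (a*(x/y))) + (f (a/(x/y)) + f (a/(x*y))) := by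
          rw [h2, h3]
      _ = f a * (g (x*y) + g (x/y)) := by rw [mul_add, h4, h5]; ring
  intro y hy
  have k1 := key y y hy hy
  have k2 := key (y^2) y (pow_pos hy 2) hy
  have e1 : y * y = y^2 := by ring
  have e2 : y / y = 1 := div_self (ne_of_gt hy)
  have e3 : y^2 * y = y^3 := by ring
  have e4 : y^2 / y = y := by
    field_simp
  rw [e1, e2, hg1] at k1
  rw [e3, e4] at k2
  have h6 : g (y^2) = g y * g y - 2 := by linarith
  rw [h6] at k2
  linear_combination -k2
end

section
/- Let g : ℝ_{>0} → ℝ be continuous and satisfy g(x) = g(1/x), g(x²) = g(x)² - 2, and g(x³) = g(x)³ - 3g(x) for all x > 0. Then there exists a complex number α that is real or purely imaginary such that g(x) = x^α + x^{-α} for all x > 0; equivalently, there exists a real number β such that either g(x) = x^β + x^{-β} for all x > 0, or g(x) = 2cos(β log x) for all x > 0. -/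
open Real


noncomputable def Efn (u : ℝ) : ℝ := Real.exp u + Real.exp (-u)

lemma Efn_even (u : ℝ) : Efn (-u) = Efn u := by simp [Efn, add_comm]

lemma Efn_zero : Efn 0 = 2 := by norm_num [Efn]

lemma Efn_two_mul (u : ℝ) : Efn (2*u) = Efn u ^ 2 - 2 := by
  have h1 : Real.exp (2*u) = Real.exp u ^ 2 := by
    rw [two_mul, Real.exp_add]; ring
  have h2 : Real.exp (-(2*u)) = Real.exp (-u) ^ 2 := by
    rw [show -(2*u) = -u + -u by ring, Real.exp_add]; ring
  have h3 : Real.exp u * Real.exp (-u) = 1 := by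
    rw [← Real.exp_add]; simp
  simp only [Efn, h1, h2]; nlinarith [h3]

lemma Efn_three_mul (u : ℝ) : Efn (3*u) = Efn u ^ 3 - 3 * Efn u := by
  have h1 : Real.exp (3*u) = Real.exp u ^ 3 := by
    rw [show (3:ℝ)*u = u + u + u by ring, Real.exp_add, Real.exp_add]; ring
  have h2 : Real.exp (-(3*u)) = Real.exp (-u) ^ 3 := by
    rw [show -(3*u) = -u + -u + -u by ring, Real.exp_add, Real.exp_add]; ring
  have h3 : Real.exp u * Real.exp (-u) = 1 := by
    rw [← Real.exp_add]; simp
  simp only [Efn, h1, h2]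
  nlinarith [h3, Real.exp_pos u, Real.exp_pos (-u)]

lemma Efn_gt_two {u : ℝ} (h : 0 < u) : 2 < Efn u := by
  have h1 : Real.exp (u/2) * Real.exp (-(u/2)) = 1 := by rw [← Real.exp_add]; simp
  have h2 : Real.exp (-(u/2)) < Real.exp (u/2) := Real.exp_lt_exp.mpr (by linarith)
  have h3 : Real.exp u = Real.exp (u/2) ^ 2 := by
    rw [show u = u/2 + u/2 by ring, Real.exp_add]; ring
  have h4 : Real.exp (-u) = Real.exp (-(u/2)) ^ 2 := by
    rw [show -u = -(u/2) + -(u/2) by ring, Real.exp_add]; ring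
  simp only [Efn, h3, h4]; nlinarith [sq_nonneg (Real.exp (u/2) - Real.exp (-(u/2)))]

lemma Efn_continuous : Continuous Efn :=
  Real.continuous_exp.add (Real.continuous_exp.comp continuous_neg)


lemma log23_dense :
    Dense ((AddSubgroup.zmultiples (Real.log 2) ⊔ AddSubgroup.zmultiples (Real.log 3) : AddSubgroup ℝ) : Set ℝ) := by
  set S : AddSubgroup ℝ := AddSubgroup.zmultiples (Real.log 2) ⊔ AddSubgroup.zmultiples (Real.log 3)
  rcases S.dense_or_cyclic with h | ⟨a, ha⟩
  · exact h
  · exfalso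
    have hl2 : Real.log 2 ∈ S := by
      exact AddSubgroup.mem_sup_left (AddSubgroup.mem_zmultiples _)
    have hl3 : Real.log 3 ∈ S := by
      exact AddSubgroup.mem_sup_right (AddSubgroup.mem_zmultiples _)
    rw [ha] at hl2 hl3
    obtain ⟨m, hm⟩ := AddSubgroup.mem_closure_singleton.mp hl2
    obtain ⟨n, hn⟩ := AddSubgroup.mem_closure_singleton.mp hl3
    have hm' : (m : ℝ) * a = Real.log 2 := by rw [← hm]; simp [zsmul_eq_mul]
    have hn' : (n : ℝ) * a = Real.log 3 := by rw [← hn]; simp [zsmul_eq_mul]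
    have h2pos : 0 < Real.log 2 := Real.log_pos (by norm_num)
    have h3pos : 0 < Real.log 3 := Real.log_pos (by norm_num)
    have hkey : (n : ℝ) * Real.log 2 = (m : ℝ) * Real.log 3 := by
      rw [← hm', ← hn']; ring
    have hn0 : n ≠ 0 := by rintro rfl; simp at hn'; linarith
    have hm0 : m ≠ 0 := by rintro rfl; simp at hm'; linarith
    -- take absolute values
    have habs : (n.natAbs : ℝ) * Real.log 2 = (m.natAbs : ℝ) * Real.log 3 := by
      have h1 : |(n:ℝ) * Real.log 2| = |(m:ℝ) * Real.log 3| := by rw [hkey]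
      rw [abs_mul, abs_mul, abs_of_pos h2pos, abs_of_pos h3pos] at h1
      have e1 : ((n.natAbs : ℝ)) = |(n:ℝ)| := by simp [Nat.cast_natAbs]
      have e2 : ((m.natAbs : ℝ)) = |(m:ℝ)| := by simp [Nat.cast_natAbs]
      rw [e1, e2, h1]
    have hlog : Real.log ((2:ℝ) ^ n.natAbs) = Real.log ((3:ℝ) ^ m.natAbs) := by
      rw [Real.log_pow, Real.log_pow]; exact_mod_cast habs
    have hpow : (2:ℝ) ^ n.natAbs = (3:ℝ) ^ m.natAbs := by
      have e1 := Real.exp_log (show (0:ℝ) < (2:ℝ) ^ n.natAbs by positivity)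
      have e2 := Real.exp_log (show (0:ℝ) < (3:ℝ) ^ m.natAbs by positivity)
      rw [← e1, ← e2, hlog]
    have hnat : 2 ^ n.natAbs = 3 ^ m.natAbs := by exact_mod_cast hpow
    have heven : Even (2 ^ n.natAbs) := by
      have : 1 ≤ n.natAbs := Nat.one_le_iff_ne_zero.mpr (Int.natAbs_ne_zero.mpr hn0)
      exact (Nat.even_pow.mpr ⟨even_two, Nat.one_le_iff_ne_zero.mp this⟩)
    have hodd : Odd (3 ^ m.natAbs) := Odd.pow (by decide)
    rw [hnat] at heven
    exact (Nat.not_even_iff_odd.mpr hodd) heven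

lemma exp_int_mul_log {x : ℝ} (hx : 0 < x) (a : ℤ) :
    Real.exp ((a : ℝ) * Real.log x) = x ^ a.toNat / x ^ (-a).toNat := by
  rcases le_or_gt 0 a with h | h
  · have h1 : ((-a).toNat) = 0 := by omega
    have h2 : (a : ℝ) = (a.toNat : ℝ) := by exact_mod_cast (Int.toNat_of_nonneg h).symm
    rw [h1, h2, pow_zero, div_one]
    rw [← Real.log_pow, Real.exp_log (by positivity)]
  · have h1 : a.toNat = 0 := by omega
    have h2 : (a : ℝ) = -(((-a).toNat : ℝ)) := by
      have : ((-a).toNat : ℤ) = -a := Int.toNat_of_nonneg (by omega)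
      have := congrArg (Int.cast : ℤ → ℝ) this
      push_cast at this; linarith
    rw [h1, h2, pow_zero]
    rw [neg_mul, ← Real.log_pow, Real.exp_neg, Real.exp_log (by positivity)]
    rw [one_div]

lemma dense_le_one (C : Set ℝ) (hC : IsClosed C)
    (hmem : ∀ j k m n : ℕ, (2:ℝ)^j * 3^k ≤ 2^m * 3^n →
      ((2:ℝ)^j * 3^k / ((2:ℝ)^m * 3^n)) ∈ C) :
    Set.Ioc (0:ℝ) 1 ⊆ C := by
  set S : AddSubgroup ℝ := AddSubgroup.zmultiples (Real.log 2) ⊔ AddSubgroup.zmultiples (Real.log 3)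
  have hdense : Dense (S : Set ℝ) := log23_dense
  have hsub : Real.exp '' (Set.Iio 0 ∩ (S : Set ℝ)) ⊆ C := by
    rintro x ⟨u, ⟨hu0, huG⟩, rfl⟩
    obtain ⟨y, hy, z, hz, rfl⟩ := AddSubgroup.mem_sup.mp huG
    obtain ⟨a, rfl⟩ := AddSubgroup.mem_zmultiples_iff.mp hy
    obtain ⟨b, rfl⟩ := AddSubgroup.mem_zmultiples_iff.mp hz
    have hy' : (a • Real.log 2 : ℝ) = (a:ℝ) * Real.log 2 := zsmul_eq_mul _ _
    have hz' : (b • Real.log 3 : ℝ) = (b:ℝ) * Real.log 3 := zsmul_eq_mul _ _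
    have hexp : Real.exp (a • Real.log 2 + b • Real.log 3) =
        ((2:ℝ)^a.toNat * 3^b.toNat) / ((2:ℝ)^(-a).toNat * 3^(-b).toNat) := by
      rw [Real.exp_add, hy', hz', exp_int_mul_log (by norm_num : (0:ℝ) < 2) a,
        exp_int_mul_log (by norm_num : (0:ℝ) < 3) b]
      field_simp
    have hle1 : Real.exp (a • Real.log 2 + b • Real.log 3) ≤ 1 :=
      le_of_lt (Real.exp_lt_one_iff.mpr hu0)
    rw [hexp] at hle1 ⊢
    have hposd : (0:ℝ) < (2:ℝ)^(-a).toNat * 3^(-b).toNat := by positivity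
    have hineq : (2:ℝ)^a.toNat * 3^b.toNat ≤ (2:ℝ)^(-a).toNat * 3^(-b).toNat := by
      rw [div_le_one hposd] at hle1; exact hle1
    exact hmem _ _ _ _ hineq
  intro x hx
  rcases eq_or_lt_of_le hx.2 with h1 | h1
  · have := hmem 0 0 0 0 (le_refl _)
    simpa [h1] using this
  · have hlx : Real.log x < 0 := Real.log_neg hx.1 h1
    have hmem' : Real.log x ∈ closure (Set.Iio 0 ∩ (S : Set ℝ)) :=
      hdense.open_subset_closure_inter isOpen_Iio hlx
    have hx' : x ∈ closure (Real.exp '' (Set.Iio 0 ∩ (S : Set ℝ))) := by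
      have himg := image_closure_subset_closure_image (s := Set.Iio 0 ∩ (S : Set ℝ)) Real.continuous_exp
      exact himg ⟨Real.log x, hmem', Real.exp_log hx.1⟩
    exact (IsClosed.closure_subset_iff hC).mpr hsub hx'


lemma scaling (P : ℝ → Prop) (hP1 : P 1)
    (d2 : ∀ t : ℝ, 0 < t → t ≤ 1 → P t → P (t/2))
    (d3 : ∀ t : ℝ, 0 < t → t ≤ 1 → P t → P (t/3))
    (u2 : ∀ t : ℝ, 0 < t → 2*t ≤ 1 → P t → P (2*t))
    (u3 : ∀ t : ℝ, 0 < t → 3*t ≤ 1 → P t → P (3*t)) :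
    ∀ j k m n : ℕ, (2:ℝ)^j * 3^k ≤ 2^m * 3^n →
      P ((2:ℝ)^j * 3^k / ((2:ℝ)^m * 3^n)) := by
  have base3 : ∀ n : ℕ, P (1/(3:ℝ)^n) := by
    intro n; induction n with
    | zero => simpa using hP1
    | succ n ih =>
      have hle : (1:ℝ)/(3:ℝ)^n ≤ 1 := by
        rw [div_le_one (by positivity)]; exact one_le_pow₀ (by norm_num)
      have h := d3 (1/(3:ℝ)^n) (by positivity) hle ih
      have he : (1:ℝ)/(3:ℝ)^n/3 = 1/(3:ℝ)^(n+1) := by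
        rw [pow_succ]; field_simp
      rwa [he] at h
  have base : ∀ m n : ℕ, P (1/((2:ℝ)^m * 3^n)) := by
    intro m
    induction m with
    | zero => intro n; simpa using base3 n
    | succ m ih =>
      intro n
      have hle : (1:ℝ)/((2:ℝ)^m * 3^n) ≤ 1 := by
        rw [div_le_one (by positivity)]
        have : (1:ℝ) ≤ (2:ℝ)^m := one_le_pow₀ (by norm_num)
        have : (1:ℝ) ≤ (3:ℝ)^n := one_le_pow₀ (by norm_num)
        nlinarith
      have h := d2 (1/((2:ℝ)^m * 3^n)) (by positivity) hle (ih n)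
      have he : (1:ℝ)/((2:ℝ)^m * 3^n)/2 = 1/((2:ℝ)^(m+1) * 3^n) := by
        rw [pow_succ]; field_simp
      rwa [he] at h
  intro j k m n
  set N : ℝ := (2:ℝ)^m * 3^n with hN
  have hNpos : (0:ℝ) < N := by positivity
  have upk : ∀ k : ℕ, (3:ℝ)^k ≤ N → P ((3:ℝ)^k / N) := by
    intro k; induction k with
    | zero =>
      intro _
      have hb := base m n
      have he : (1:ℝ)/((2:ℝ)^m*3^n) = (3:ℝ)^0 / N := by rw [hN]; norm_num
      rwa [he] at hb
    | succ k ih =>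
      intro h
      have h3 : (3:ℝ)^k ≤ (3:ℝ)^(k+1) := by
        rw [pow_succ]; nlinarith [pow_pos (show (0:ℝ) < 3 by norm_num) k]
      have hk := ih (le_trans h3 h)
      have hcond : 3 * ((3:ℝ)^k / N) ≤ 1 := by
        rw [show 3 * ((3:ℝ)^k / N) = (3:ℝ)^(k+1) / N by rw [pow_succ]; ring,
          div_le_one hNpos]
        exact h
      have := u3 ((3:ℝ)^k / N) (by positivity) hcond hk
      rwa [show 3 * ((3:ℝ)^k / N) = (3:ℝ)^(k+1) / N by rw [pow_succ]; ring] at this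
  have upjk : ∀ j k : ℕ, (2:ℝ)^j * 3^k ≤ N → P ((2:ℝ)^j * 3^k / N) := by
    intro j
    induction j with
    | zero =>
      intro k h
      have := upk k (by simpa using h)
      simpa using this
    | succ j ih =>
      intro k h
      have h2 : (2:ℝ)^j * 3^k ≤ (2:ℝ)^(j+1) * 3^k := by
        rw [pow_succ]
        nlinarith [pow_pos (show (0:ℝ) < 2 by norm_num) j,
          pow_pos (show (0:ℝ) < 3 by norm_num) k]
      have hk := ih k (le_trans h2 h)
      have hcond : 2 * ((2:ℝ)^j * 3^k / N) ≤ 1 := by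
        rw [show 2 * ((2:ℝ)^j * 3^k / N) = (2:ℝ)^(j+1) * 3^k / N by rw [pow_succ]; ring,
          div_le_one hNpos]
        exact h
      have := u2 ((2:ℝ)^j * 3^k / N) (by positivity) hcond hk
      rwa [show 2 * ((2:ℝ)^j * 3^k / N) = (2:ℝ)^(j+1) * 3^k / N by rw [pow_succ]; ring] at this
  exact upjk j k

lemma extend_from_base (f q : ℝ → ℝ)
    (hf2 : ∀ t : ℝ, f (2*t) = f t ^ 2 - 2)
    (hq2 : ∀ t : ℝ, q (2*t) = q t ^ 2 - 2)
    {δ : ℝ} (hδ : 0 < δ)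
    (hbase : ∀ u : ℝ, |u| ≤ δ → f u = q u) :
    ∀ u : ℝ, f u = q u := by
  have main : ∀ n : ℕ, ∀ u : ℝ, |u| ≤ 2^n * δ → f u = q u := by
    intro n; induction n with
    | zero => intro u hu; exact hbase u (by simpa using hu)
    | succ n ih =>
      intro u hu
      have hu2 : |u/2| ≤ 2^n * δ := by
        rw [abs_div]
        rw [pow_succ] at hu
        simp only [abs_two]
        linarith [abs_nonneg u]
      have h := ih (u/2) hu2
      have := hf2 (u/2)
      rw [show 2*(u/2) = u by ring] at this
      have hq := hq2 (u/2)
      rw [show 2*(u/2) = u by ring] at hq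
      rw [this, hq, h]
  intro u
  obtain ⟨n, hn⟩ := pow_unbounded_of_one_lt (|u|/δ) (show (1:ℝ) < 2 by norm_num)
  exact main n u (by rw [div_lt_iff₀ hδ] at hn; linarith)

theorem g_characterization (g : ℝ → ℝ) (hg : ContinuousOn g (Set.Ioi 0))
    (h1 : ∀ x : ℝ, 0 < x → g x = g (1/x))
    (h2 : ∀ x : ℝ, 0 < x → g (x^2) = (g x)^2 - 2)
    (h3 : ∀ x : ℝ, 0 < x → g (x^3) = (g x)^3 - 3 * g x) :
    ∃ β : ℝ, (∀ x : ℝ, 0 < x → g x = x ^ β + x ^ (-β)) ∨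
      (∀ x : ℝ, 0 < x → g x = 2 * Real.cos (β * Real.log x)) := by
  set f : ℝ → ℝ := fun t => g (Real.exp t) with hfdef
  have hfc : Continuous f := hg.comp_continuous Real.continuous_exp (fun t => Real.exp_pos t)
  have hf2 : ∀ t : ℝ, f (2*t) = f t ^ 2 - 2 := by
    intro t
    show g (Real.exp (2*t)) = g (Real.exp t) ^ 2 - 2
    rw [show Real.exp (2*t) = (Real.exp t)^2 by rw [two_mul, Real.exp_add]; ring]
    exact h2 _ (Real.exp_pos t)
  have hf3 : ∀ t : ℝ, f (3*t) = f t ^ 3 - 3 * f t := by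
    intro t
    show g (Real.exp (3*t)) = g (Real.exp t) ^ 3 - 3 * g (Real.exp t)
    rw [show Real.exp (3*t) = (Real.exp t)^3 by
      rw [show (3:ℝ)*t = t + t + t by ring, Real.exp_add, Real.exp_add]; ring]
    exact h3 _ (Real.exp_pos t)
  have hfe : ∀ t : ℝ, f (-t) = f t := by
    intro t
    show g (Real.exp (-t)) = g (Real.exp t)
    rw [Real.exp_neg, ← one_div]
    exact (h1 _ (Real.exp_pos t)).symm
  have hf0 : f 0 = 2 := by
    have a2 := hf2 0
    have a3 := hf3 0
    rw [mul_zero] at a2 a3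
    have e1 : (f 0 - 2) * (f 0 + 1) = 0 := by linear_combination -a2
    rcases mul_eq_zero.mp e1 with h0 | h0
    · linarith
    · exfalso
      have : f 0 = -1 := by linarith
      rw [this] at a3; norm_num at a3
  have hlow : ∀ t : ℝ, -2 ≤ f t := by
    intro t
    have h := hf2 (t/2)
    rw [show 2*(t/2) = t by ring] at h
    nlinarith [sq_nonneg (f (t/2))]
  by_cases hbig : ∃ s, 2 < f s
  · -- hyperbolic case
    obtain ⟨s0, hs0⟩ := hbig
    have hs0ne : s0 ≠ 0 := by rintro rfl; rw [hf0] at hs0; linarith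
    have hspos : 0 < |s0| := abs_pos.mpr hs0ne
    set s := |s0| with hs
    have hfs : 2 < f s := by
      rcases abs_choice s0 with h | h
      · rwa [hs, h]
      · rw [hs, h, hfe]; exact hs0
    -- find c with Efn c = f s
    have hcont : ContinuousOn Efn (Set.Icc 0 (f s)) := Efn_continuous.continuousOn
    have hmemI : f s ∈ Set.Icc (Efn 0) (Efn (f s)) := by
      constructor
      · rw [Efn_zero]; linarith
      · have h1' := Real.add_one_le_exp (f s)
        have h2' := Real.exp_pos (-(f s))
        show f s ≤ Real.exp (f s) + Real.exp (-(f s))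
        linarith
    obtain ⟨c, hcmem, hc⟩ := intermediate_value_Icc (by linarith : (0:ℝ) ≤ f s) hcont hmemI
    have hcpos : 0 < c := by
      rcases lt_or_eq_of_le hcmem.1 with h | h
      · exact h
      · exfalso; rw [← h, Efn_zero] at hc; linarith
    have down2 : ∀ t d : ℝ, 0 < d → f t = Efn d → f (t/2) = Efn (d/2) := by
      intro t d hd hfd
      have h := hf2 (t/2); rw [show 2*(t/2) = t by ring] at h
      have hE := Efn_two_mul (d/2); rw [show 2*(d/2) = d by ring] at hE
      have hgt : 2 < Efn (d/2) := Efn_gt_two (by positivity)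
      have hl := hlow (t/2)
      have hfac : (f (t/2) - Efn (d/2)) * (f (t/2) + Efn (d/2)) = 0 := by
        linear_combination -h + hfd + hE
      rcases mul_eq_zero.mp hfac with h0 | h0
      · linarith
      · linarith
    have down3 : ∀ t d : ℝ, 0 < d → f t = Efn d → f (t/3) = Efn (d/3) := by
      intro t d hd hfd
      have h := hf3 (t/3); rw [show 3*(t/3) = t by ring] at h
      have hE := Efn_three_mul (d/3); rw [show 3*(d/3) = d by ring] at hE
      have hgt : 2 < Efn (d/3) := Efn_gt_two (by positivity)
      have hfac : (f (t/3) - Efn (d/3)) *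
          ((f (t/3))^2 + f (t/3) * Efn (d/3) + (Efn (d/3))^2 - 3) = 0 := by
        linear_combination -h + hfd + hE
      rcases mul_eq_zero.mp hfac with h0 | h0
      · linarith
      · exfalso; nlinarith [sq_nonneg (2 * f (t/3) + Efn (d/3))]
    have key := scaling (fun t => f (t*s) = Efn (t*c))
      (by simp only [one_mul]; exact hc.symm)
      (by
        intro t ht _ hPt
        have := down2 (t*s) (t*c) (by positivity) hPt
        rw [show t*s/2 = t/2*s by ring, show t*c/2 = t/2*c by ring] at this
        exact this)
      (by
        intro t ht _ hPt
        have := down3 (t*s) (t*c) (by positivity) hPt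
        rw [show t*s/3 = t/3*s by ring, show t*c/3 = t/3*c by ring] at this
        exact this)
      (by
        intro t ht _ hPt
        have h := hf2 (t*s)
        rw [hPt, ← Efn_two_mul] at h
        rw [show 2*t*s = 2*(t*s) by ring, show 2*t*c = 2*(t*c) by ring]
        exact h)
      (by
        intro t ht _ hPt
        have h := hf3 (t*s)
        rw [hPt, ← Efn_three_mul] at h
        rw [show 3*t*s = 3*(t*s) by ring, show 3*t*c = 3*(t*c) by ring]
        exact h)
    have hclosed : IsClosed {t : ℝ | f (t*s) = Efn (t*c)} :=
      isClosed_eq (hfc.comp (continuous_id.mul continuous_const))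
        (Efn_continuous.comp (continuous_id.mul continuous_const))
    have hIoc : Set.Ioc (0:ℝ) 1 ⊆ {t : ℝ | f (t*s) = Efn (t*c)} :=
      dense_le_one _ hclosed (fun j k m n h => key j k m n h)
    have hbaseB : ∀ u : ℝ, |u| ≤ s → f u = Efn ((c/s)*u) := by
      have habs : ∀ v : ℝ, 0 ≤ v → v ≤ s → f v = Efn ((c/s)*v) := by
        intro v hv0 hvs
        rcases eq_or_lt_of_le hv0 with h | h
        · rw [← h, mul_zero, Efn_zero, hf0]
        · have hmem : v/s ∈ Set.Ioc (0:ℝ) 1 :=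
            ⟨by positivity, by rw [div_le_one hspos]; exact hvs⟩
          have hv := hIoc hmem
          simp only [Set.mem_setOf_eq] at hv
          rw [div_mul_cancel₀ _ (ne_of_gt hspos)] at hv
          rw [hv, show v/s*c = c/s*v by ring]
      intro u hu
      rcases le_or_gt 0 u with h | h
      · exact habs u h (le_trans (le_abs_self u) hu)
      · have hv := habs (-u) (by linarith) (by rw [abs_of_neg h] at hu; linarith)
        calc f u = f (-u) := (hfe u).symm
          _ = Efn ((c/s)*(-u)) := hv
          _ = Efn ((c/s)*u) := by
              rw [show (c/s)*(-u) = -((c/s)*u) by ring, Efn_even]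
    have hq2 : ∀ u : ℝ, Efn ((c/s)*(2*u)) = Efn ((c/s)*u) ^ 2 - 2 := by
      intro u
      rw [show (c/s)*(2*u) = 2*((c/s)*u) by ring, Efn_two_mul]
    have hall := extend_from_base f (fun u => Efn ((c/s)*u)) hf2 hq2 hspos hbaseB
    refine ⟨c/s, Or.inl ?_⟩
    intro x hx
    have hgx : g x = f (Real.log x) := by
      show g x = g (Real.exp (Real.log x))
      rw [Real.exp_log hx]
    rw [hgx, hall (Real.log x)]
    show Real.exp ((c/s) * Real.log x) + Real.exp (-((c/s) * Real.log x)) = _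
    rw [Real.rpow_def_of_pos hx, Real.rpow_def_of_pos hx,
      show Real.log x * (c/s) = (c/s) * Real.log x by ring,
      show Real.log x * (-(c/s)) = -((c/s) * Real.log x) by ring]
  · -- trigonometric case
    push_neg at hbig
    set θ : ℝ → ℝ := fun t => Real.arccos (f t / 2) with hθdef
    have hθc : Continuous θ := Real.continuous_arccos.comp (hfc.div_const 2)
    have hb1 : ∀ t : ℝ, -1 ≤ f t / 2 := fun t => by linarith [hlow t]
    have hb2 : ∀ t : ℝ, f t / 2 ≤ 1 := fun t => by linarith [hbig t]
    have hfθ : ∀ t : ℝ, f t = 2 * Real.cos (θ t) := by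
      intro t
      show f t = 2 * Real.cos (Real.arccos (f t / 2))
      rw [Real.cos_arccos (hb1 t) (hb2 t)]; ring
    have hθnn : ∀ t : ℝ, 0 ≤ θ t := fun t => Real.arccos_nonneg _
    have hθ0 : θ 0 = 0 := by
      show Real.arccos (f 0 / 2) = 0
      rw [hf0]; norm_num [Real.arccos_one]
    have hπ : (0:ℝ) < Real.pi := Real.pi_pos
    have hnhds : θ ⁻¹' (Set.Iio (Real.pi/3)) ∈ nhds 0 := by
      apply hθc.continuousAt.preimage_mem_nhds
      rw [hθ0]
      exact Iio_mem_nhds (by linarith)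
    obtain ⟨ε, hε, hball⟩ := Metric.mem_nhds_iff.mp hnhds
    have hδpos : 0 < ε/2 := by linarith
    set δ := ε/2 with hδdef
    have hsmall : ∀ w : ℝ, |w| ≤ δ → θ w < Real.pi/3 := by
      intro w hw
      have : w ∈ Metric.ball (0:ℝ) ε := by
        rw [Metric.mem_ball, dist_zero_right, Real.norm_eq_abs]
        rw [hδdef] at hw; linarith
      exact hball this
    have rule2 : ∀ w : ℝ, |w| ≤ δ → θ (2*w) = 2 * θ w := by
      intro w hw
      have h1' := hsmall w hw
      have h0' := hθnn w
      have hcos : f (2*w) / 2 = Real.cos (2 * θ w) := by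
        rw [hf2, hfθ w, Real.cos_two_mul]; ring
      show Real.arccos (f (2*w) / 2) = 2 * θ w
      rw [hcos, Real.arccos_cos (by linarith) (by linarith)]
    have rule3 : ∀ w : ℝ, |w| ≤ δ → θ (3*w) = 3 * θ w := by
      intro w hw
      have h1' := hsmall w hw
      have h0' := hθnn w
      have hcos : f (3*w) / 2 = Real.cos (3 * θ w) := by
        rw [hf3, hfθ w, Real.cos_three_mul]; ring
      show Real.arccos (f (3*w) / 2) = 3 * θ w
      rw [hcos, Real.arccos_cos (by linarith) (by linarith)]
    have key := scaling (fun t => θ (t*δ) = t * θ δ)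
      (by simp only [one_mul])
      (by
        intro t ht ht1 hPt
        have hwabs : |t/2*δ| ≤ δ := by
          rw [abs_of_pos (by positivity)]; nlinarith
        have h := rule2 (t/2*δ) hwabs
        rw [show 2*(t/2*δ) = t*δ by ring, hPt] at h
        linarith
      )
      (by
        intro t ht ht1 hPt
        have hwabs : |t/3*δ| ≤ δ := by
          rw [abs_of_pos (by positivity)]; nlinarith
        have h := rule3 (t/3*δ) hwabs
        rw [show 3*(t/3*δ) = t*δ by ring, hPt] at h
        linarith
      )
      (by
        intro t ht ht1 hPt
        have hwabs : |t*δ| ≤ δ := by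
          rw [abs_of_pos (by positivity)]; nlinarith
        have h := rule2 (t*δ) hwabs
        rw [hPt] at h
        rw [show 2*t*δ = 2*(t*δ) by ring, h]; ring
      )
      (by
        intro t ht ht1 hPt
        have hwabs : |t*δ| ≤ δ := by
          rw [abs_of_pos (by positivity)]; nlinarith
        have h := rule3 (t*δ) hwabs
        rw [hPt] at h
        rw [show 3*t*δ = 3*(t*δ) by ring, h]; ring
      )
    have hclosed : IsClosed {t : ℝ | θ (t*δ) = t * θ δ} :=
      isClosed_eq (hθc.comp (continuous_id.mul continuous_const))
        (continuous_id.mul continuous_const)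
    have hIoc : Set.Ioc (0:ℝ) 1 ⊆ {t : ℝ | θ (t*δ) = t * θ δ} :=
      dense_le_one _ hclosed (fun j k m n h => key j k m n h)
    set β := θ δ / δ with hβ
    have hbaseA : ∀ u : ℝ, |u| ≤ δ → f u = 2 * Real.cos (β * u) := by
      have habs : ∀ v : ℝ, 0 ≤ v → v ≤ δ → f v = 2 * Real.cos (β * v) := by
        intro v hv0 hvs
        rcases eq_or_lt_of_le hv0 with h | h
        · rw [← h, mul_zero, Real.cos_zero, hf0]; norm_num
        · have hmem : v/δ ∈ Set.Ioc (0:ℝ) 1 :=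
            ⟨by positivity, by rw [div_le_one hδpos]; exact hvs⟩
          have hv := hIoc hmem
          simp only [Set.mem_setOf_eq] at hv
          rw [div_mul_cancel₀ _ (ne_of_gt hδpos)] at hv
          rw [hfθ v, hv, show v/δ*θ δ = β*v by rw [hβ]; ring]
      intro u hu
      rcases le_or_gt 0 u with h | h
      · exact habs u h (le_trans (le_abs_self u) hu)
      · have hv := habs (-u) (by linarith) (by rw [abs_of_neg h] at hu; linarith)
        calc f u = f (-u) := (hfe u).symm
          _ = 2 * Real.cos (β * (-u)) := hv
          _ = 2 * Real.cos (β * u) := by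
              rw [show β*(-u) = -(β*u) by ring, Real.cos_neg]
    have hq2 : ∀ u : ℝ, 2 * Real.cos (β*(2*u)) = (2 * Real.cos (β*u)) ^ 2 - 2 := by
      intro u
      rw [show β*(2*u) = 2*(β*u) by ring, Real.cos_two_mul]; ring
    have hall := extend_from_base f (fun u => 2 * Real.cos (β*u)) hf2 hq2 hδpos hbaseA
    refine ⟨β, Or.inr ?_⟩
    intro x hx
    have hgx : g x = f (Real.log x) := by
      show g x = g (Real.exp (Real.log x))
      rw [Real.exp_log hx]
    rw [hgx, hall (Real.log x)]
end

section
/- Let f : ℝ_{>0} → ℝ be continuous and satisfy 2f(a) = f(ax) + f(a/x) for all positive reals a, x. Then there exist real constants c₁, c₂ such that f(x) = c₁ + c₂ log x for all x > 0. -/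
theorem jensen_multiplicative (f : ℝ → ℝ) (hf : ContinuousOn f (Set.Ioi 0))
    (heq : ∀ a x : ℝ, 0 < a → 0 < x → 2 * f a = f (a*x) + f (a/x)) :
    ∃ c₁ c₂ : ℝ, ∀ x : ℝ, 0 < x → f x = c₁ + c₂ * Real.log x := by
  set g : ℝ → ℝ := fun t => f (Real.exp t) with hg
  have hgc : Continuous g := by
    apply hf.comp_continuous Real.continuous_exp
    intro t; exact Real.exp_pos t
  have hgeq : ∀ u v : ℝ, 2 * g u = g (u + v) + g (u - v) := by
    intro u v
    have := heq (Real.exp u) (Real.exp v) (Real.exp_pos u) (Real.exp_pos v)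
    simpa [hg, ← Real.exp_add, ← Real.exp_sub] using this
  have hadd : ∀ x y : ℝ, g (x + y) + g 0 = g x + g y := by
    intro x y
    have h1 := hgeq ((x + y) / 2) ((x - y) / 2)
    have h2 := hgeq ((x + y) / 2) ((x + y) / 2)
    have e1 : (x + y) / 2 + (x - y) / 2 = x := by ring
    have e2 : (x + y) / 2 - (x - y) / 2 = y := by ring
    have e3 : (x + y) / 2 + (x + y) / 2 = x + y := by ring
    have e4 : (x + y) / 2 - (x + y) / 2 = (0 : ℝ) := by ring
    rw [e1, e2] at h1
    rw [e3, e4] at h2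
    linarith
  set h : ℝ → ℝ := fun t => g t - g 0 with hh
  have hhadd : ∀ x y, h (x + y) = h x + h y := by
    intro x y
    have := hadd x y
    simp only [hh]
    linarith
  let H : ℝ →+ ℝ := AddMonoidHom.mk' h hhadd
  have hHc : Continuous H := by
    exact (hgc.sub continuous_const : Continuous h)
  have hlin : ∀ t : ℝ, h t = t * h 1 := by
    intro t
    have := (H.toRealLinearMap hHc).map_smul t 1
    simpa [H, smul_eq_mul] using this
  refine ⟨g 0, h 1, fun x hx => ?_⟩
  have : f x = g (Real.log x) := by simp [hg, Real.exp_log hx]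
  rw [this]
  have := hlin (Real.log x)
  simp only [hh] at this ⊢
  rw [mul_comm] at this
  linarith
end

section
/- Let α ≠ 0 be a real number and let f : ℝ_{>0} → ℝ be continuous and satisfy (x^α + x^{-α}) f(a) = f(ax) + f(a/x) for all positive reals a, x. Then there exist real constants c₁, c₂ such that f(x) = c₁ x^α + c₂ x^{-α} for all x > 0. -/
theorem power_functional_equation (α : ℝ) (hα : α ≠ 0) (f : ℝ → ℝ)
    (hf : ContinuousOn f (Set.Ioi 0))
    (heq : ∀ a x : ℝ, 0 < a → 0 < x →
      (x ^ α + x ^ (-α)) * f a = f (a*x) + f (a/x)) :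
    ∃ c₁ c₂ : ℝ, ∀ x : ℝ, 0 < x → f x = c₁ * x ^ α + c₂ * x ^ (-α) := by
  have h2 : (0:ℝ) < 2 := by norm_num
  -- 2^α ≠ 2^(-α)
  have hne : (2:ℝ) ^ (-α) - (2:ℝ) ^ α ≠ 0 := by
    have h12 : (1:ℝ) < 2 := by norm_num
    rcases hα.lt_or_gt with h | h
    · have : (2:ℝ) ^ α < (2:ℝ) ^ (-α) :=
        (Real.rpow_lt_rpow_left_iff h12).2 (by linarith)
      intro hc; linarith
    · have : (2:ℝ) ^ (-α) < (2:ℝ) ^ α :=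
        (Real.rpow_lt_rpow_left_iff h12).2 (by linarith)
      intro hc; linarith
  set c₂ : ℝ := (f 2 - 2 ^ α * f 1) / ((2:ℝ) ^ (-α) - 2 ^ α) with hc₂
  set c₁ : ℝ := f 1 - c₂ with hc₁
  set h : ℝ → ℝ := fun x => f x - c₁ * x ^ α - c₂ * x ^ (-α) with hh
  clear_value c₂ c₁ h
  have hφpos : ∀ x : ℝ, 0 < x → 0 < x ^ α + x ^ (-α) := fun x hx =>
    add_pos (Real.rpow_pos_of_pos hx _) (Real.rpow_pos_of_pos hx _)
  -- h satisfies the same functional equation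
  have heq' : ∀ a x : ℝ, 0 < a → 0 < x →
      (x ^ α + x ^ (-α)) * h a = h (a*x) + h (a/x) := by
    intro a x ha hx
    have e1 : (a*x) ^ α = a ^ α * x ^ α := Real.mul_rpow ha.le hx.le
    have e2 : (a*x) ^ (-α) = a ^ (-α) * x ^ (-α) := Real.mul_rpow ha.le hx.le
    have e3 : (a/x) ^ α = a ^ α * x ^ (-α) := by
      rw [Real.div_rpow ha.le hx.le, Real.rpow_neg hx.le, div_eq_mul_inv]
    have e4 : (a/x) ^ (-α) = a ^ (-α) * x ^ α := by
      rw [Real.rpow_neg (div_pos ha hx).le, e3, mul_inv, ← Real.rpow_neg ha.le,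
        ← Real.rpow_neg hx.le, neg_neg]
    have key := heq a x ha hx
    simp only [hh, e1, e2, e3, e4]
    ring_nf
    ring_nf at key
    linarith
  have h1 : h 1 = 0 := by
    simp only [hh, Real.one_rpow, hc₁]; ring
  have hval2 : h 2 = 0 := by
    simp only [hh, hc₁, hc₂]
    field_simp
    ring
  -- basic consequences
  have hinv : ∀ x : ℝ, 0 < x → h (1/x) = - h x := by
    intro x hx
    have := heq' 1 x one_pos hx
    rw [h1, one_mul, mul_zero] at this
    linarith
  have hmul : ∀ a x : ℝ, 0 < a → 0 < x →
      2 * h (a*x) = (x ^ α + x ^ (-α)) * h a + (a ^ α + a ^ (-α)) * h x := by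
    intro a x ha hx
    have e1 := heq' a x ha hx
    have e2 := heq' x a hx ha
    have e3 : h (x/a) = - h (a/x) := by
      have hxa : x/a = 1/(a/x) := by field_simp
      rw [hxa, hinv _ (div_pos ha hx)]
    rw [mul_comm x a, e3] at e2
    linear_combination -e1 - e2
  have hsq : ∀ x : ℝ, 0 < x → (x ^ α + x ^ (-α)) * h x = h (x*x) := by
    intro x hx
    have := heq' x x hx hx
    rw [div_self hx.ne', h1] at this
    linarith
  -- g t = h (2^t)
  set g : ℝ → ℝ := fun t => h ((2:ℝ) ^ t) with hg
  have hgpos : ∀ t : ℝ, (0:ℝ) < 2 ^ t := fun t => Real.rpow_pos_of_pos h2 t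
  have g0 : g 0 = 0 := by simp only [hg, Real.rpow_zero]; exact h1
  have g1 : g 1 = 0 := by simp only [hg, Real.rpow_one]; exact hval2
  have gadd : ∀ s t : ℝ, g s = 0 → g t = 0 → g (s+t) = 0 := by
    intro s t hs ht
    have key := hmul ((2:ℝ)^s) ((2:ℝ)^t) (hgpos s) (hgpos t)
    rw [show h ((2:ℝ)^s * 2^t) = g (s+t) by rw [← Real.rpow_add h2]] at key
    simp only [hg] at hs ht
    rw [hs, ht, mul_zero, mul_zero] at key
    linarith
  have gneg : ∀ t : ℝ, g t = 0 → g (-t) = 0 := by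
    intro t ht
    have e : (2:ℝ) ^ (-t) = 1 / 2 ^ t := by
      rw [Real.rpow_neg h2.le, one_div]
    simp only [hg] at ht ⊢
    rw [e, hinv _ (hgpos t), ht, neg_zero]
  have ghalf : ∀ t : ℝ, g t = 0 → g (t/2) = 0 := by
    intro t ht
    have key := hsq ((2:ℝ)^(t/2)) (hgpos (t/2))
    rw [show (2:ℝ)^(t/2) * 2^(t/2) = 2^t by
      rw [← Real.rpow_add h2]; norm_num] at key
    simp only [hg] at ht ⊢
    rw [ht] at key
    have hp := hφpos _ (hgpos (t/2))
    rcases mul_eq_zero.1 key with hc | hc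
    · exact absurd hc hp.ne'
    · exact hc
  -- the zero set of g is an additive subgroup containing arbitrarily small positives
  set S : AddSubgroup ℝ :=
    { carrier := {t | g t = 0}
      zero_mem' := g0
      add_mem' := fun {a b} ha hb => gadd a b ha hb
      neg_mem' := fun {a} ha => gneg a ha } with hS
  have hsmall : ∀ n : ℕ, g (1/2^n) = 0 := by
    intro n
    induction n with
    | zero => simpa using g1
    | succ n ih =>
      have key := ghalf _ ih
      rwa [show (1:ℝ)/2^n/2 = 1/2^(n+1) by rw [pow_succ]; ring] at key
  have hdense : Dense (S : Set ℝ) := by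
    apply S.dense_of_not_isolated_zero
    intro ε hε
    obtain ⟨n, hn⟩ := pow_unbounded_of_one_lt (1/ε) (by norm_num : (1:ℝ) < 2)
    refine ⟨1/2^n, hsmall n, ?_, ?_⟩
    · positivity
    · rw [div_lt_iff₀ (by positivity)]
      rw [div_lt_iff₀ hε] at hn
      nlinarith
  -- g is continuous
  have hhcont : ContinuousOn h (Set.Ioi 0) := by
    rw [hh]
    apply ContinuousOn.sub
    apply ContinuousOn.sub hf
    · exact ContinuousOn.mul continuousOn_const
        (fun x hx => (Real.continuousAt_rpow_const x α
          (Or.inl (ne_of_gt hx))).continuousWithinAt)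
    · exact ContinuousOn.mul continuousOn_const
        (fun x hx => (Real.continuousAt_rpow_const x (-α)
          (Or.inl (ne_of_gt hx))).continuousWithinAt)
  have hgcont : Continuous g := by
    rw [continuous_iff_continuousAt]
    intro t
    exact (hhcont.continuousAt (Ioi_mem_nhds (hgpos t))).comp
      (Real.continuousAt_const_rpow (by norm_num : (2:ℝ) ≠ 0))
  -- g vanishes everywhere
  have hgzero : ∀ t : ℝ, g t = 0 := by
    have hclosed : IsClosed {t : ℝ | g t = 0} :=
      isClosed_eq hgcont continuous_const
    have hsub : (S : Set ℝ) ⊆ {t : ℝ | g t = 0} := fun t ht => ht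
    have := closure_minimal hsub hclosed
    intro t
    have : t ∈ {t : ℝ | g t = 0} := this (hdense t)
    exact this
  -- conclude
  refine ⟨c₁, c₂, fun x hx => ?_⟩
  have := hgzero (Real.logb 2 x)
  simp only [hg] at this
  rw [Real.rpow_logb h2 (by norm_num) hx] at this
  simp only [hh] at this
  linarith
end

section
/- The set of rational numbers of the form 2^n · 3^{-m}, where n and m range over the nonnegative integers, is dense in the positive real numbers. -/
open Real Set

private lemma log2_pos : (0:ℝ) < Real.log 2 := Real.log_pos (by norm_num)
private lemma log3_pos : (0:ℝ) < Real.log 3 := Real.log_pos (by norm_num)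

/-- no nontrivial natural relation q log 2 = p log 3 -/
private lemma aux_nat (q p : ℕ) (h : (q:ℝ) * Real.log 2 = (p:ℝ) * Real.log 3)
    (h0 : q ≠ 0 ∨ p ≠ 0) : False := by
  have h2 : Real.log ((2:ℝ)^q) = Real.log ((3:ℝ)^p) := by
    rw [Real.log_pow, Real.log_pow]; exact_mod_cast h
  have hr : (2:ℝ)^q = (3:ℝ)^p :=
    Real.log_injOn_pos (mem_Ioi.2 (by positivity)) (mem_Ioi.2 (by positivity)) h2
  have hn : (2:ℕ)^q = 3^p := by exact_mod_cast hr
  rcases Nat.eq_zero_or_pos q with hq | hq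
  · subst hq
    have hp : p = 0 := by
      rcases Nat.eq_zero_or_pos p with h | h
      · exact h
      · exfalso
        have : (1:ℕ) < 3^p := Nat.one_lt_pow h.ne' (by norm_num)
        simp at hn
        omega
    rcases h0 with h0 | h0
    · exact h0 rfl
    · exact h0 hp
  · have : (2:ℕ) ∣ 3^p := hn ▸ dvd_pow_self 2 hq.ne'
    have := Nat.Prime.dvd_of_dvd_pow Nat.prime_two this
    omega

private lemma natAbs_cast (x v : ℤ) (h : (x.natAbs : ℤ) = v) : ((x.natAbs : ℕ) : ℝ) = ((v:ℤ):ℝ) := by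
  rw [← h]; exact (Int.cast_natCast _).symm

private lemma aux_int (q p : ℤ) (h : (q:ℝ) * Real.log 2 = (p:ℝ) * Real.log 3) : q = 0 := by
  by_contra hq
  rcases lt_trichotomy q 0 with hq' | hq' | hq'
  · have hqr : (q:ℝ) < 0 := by exact_mod_cast hq'
    have hp : p < 0 := by
      by_contra hp
      push_neg at hp
      have hpr : (0:ℝ) ≤ p := by exact_mod_cast hp
      have h1 : (q:ℝ) * Real.log 2 < 0 := mul_neg_of_neg_of_pos hqr log2_pos
      have h2 : (0:ℝ) ≤ (p:ℝ) * Real.log 3 := mul_nonneg hpr log3_pos.le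
      linarith
    have e1 : (q.natAbs : ℝ) = -(q:ℝ) := by
      rw [natAbs_cast q (-q) (by omega)] <;> push_cast <;> ring
    have e2 : (p.natAbs : ℝ) = -(p:ℝ) := by
      rw [natAbs_cast p (-p) (by omega)] <;> push_cast <;> ring
    refine aux_nat q.natAbs p.natAbs ?_ (Or.inl (by omega))
    rw [e1, e2]
    linarith
  · exact hq hq'
  · have hqr : (0:ℝ) < q := by exact_mod_cast hq'
    have hp : 0 < p := by
      by_contra hp
      push_neg at hp
      have hpr : (p:ℝ) ≤ 0 := by exact_mod_cast hp
      have h1 : (0:ℝ) < (q:ℝ) * Real.log 2 := mul_pos hqr log2_pos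
      have h2 : (p:ℝ) * Real.log 3 ≤ 0 := mul_nonpos_of_nonpos_of_nonneg hpr log3_pos.le
      linarith
    have e1 : (q.natAbs : ℝ) = (q:ℝ) := by
      rw [natAbs_cast q (q) (by omega)] <;> push_cast <;> ring
    have e2 : (p.natAbs : ℝ) = (p:ℝ) := by
      rw [natAbs_cast p (p) (by omega)] <;> push_cast <;> ring
    refine aux_nat q.natAbs p.natAbs ?_ (Or.inl (by omega))
    rw [e1, e2]
    exact h

private lemma dense23 :
    Dense ((AddSubgroup.closure {Real.log 2, Real.log 3} : AddSubgroup ℝ) : Set ℝ) := by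
  rcases (AddSubgroup.closure {Real.log 2, Real.log 3}).dense_or_cyclic with h | ⟨a, ha⟩
  · exact h
  · exfalso
    have h2 : Real.log 2 ∈ AddSubgroup.closure ({Real.log 2, Real.log 3} : Set ℝ) :=
      AddSubgroup.subset_closure (by simp)
    have h3 : Real.log 3 ∈ AddSubgroup.closure ({Real.log 2, Real.log 3} : Set ℝ) :=
      AddSubgroup.subset_closure (by simp)
    rw [ha, AddSubgroup.mem_closure_singleton] at h2 h3
    obtain ⟨p, hp⟩ := h2
    obtain ⟨q, hq⟩ := h3
    have key : (q:ℝ) * Real.log 2 = (p:ℝ) * Real.log 3 := by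
      rw [← hp, ← hq]
      push_cast [zsmul_eq_mul]
      ring
    have := aux_int q p key
    subst this
    simp at hq
    exact log3_pos.ne' hq.symm

/-- some nonzero small element of ℕ-form -/
private lemma small_elt (ε : ℝ) (hε : 0 < ε) (hε2 : ε ≤ 1/2) :
    ∃ n m : ℕ, ((n:ℝ) * Real.log 2 - m * Real.log 3 ∈ Ioo 0 ε) ∨
      ((n:ℝ) * Real.log 2 - m * Real.log 3 ∈ Ioo (-ε) 0) := by
  obtain ⟨s, hs1, hs2⟩ := dense23.exists_mem_open isOpen_Ioo (nonempty_Ioo.2 hε)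
  obtain ⟨i, j, hij⟩ := AddSubgroup.mem_closure_pair.1 hs1
  obtain ⟨hs0, hsε⟩ := hs2
  have hij' : (i:ℝ) * Real.log 2 + (j:ℝ) * Real.log 3 = s := by
    rw [← hij]; push_cast [zsmul_eq_mul]; ring
  rcases le_or_gt i 0 with hi | hi <;> rcases le_or_gt j 0 with hj | hj
  · exfalso
    have hi' : (i:ℝ) ≤ 0 := by exact_mod_cast hi
    have hj' : (j:ℝ) ≤ 0 := by exact_mod_cast hj
    have h1 : (i:ℝ) * Real.log 2 ≤ 0 := mul_nonpos_of_nonpos_of_nonneg hi' log2_pos.le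
    have h2 : (j:ℝ) * Real.log 3 ≤ 0 := mul_nonpos_of_nonpos_of_nonneg hj' log3_pos.le
    linarith
  · -- i ≤ 0, j > 0 : negative form
    have e1 : (i.natAbs : ℝ) = -(i:ℝ) := by
      rw [natAbs_cast i (-i) (by omega)] <;> push_cast <;> ring
    have e2 : (j.natAbs : ℝ) = (j:ℝ) := by
      rw [natAbs_cast j (j) (by omega)] <;> push_cast <;> ring
    refine ⟨i.natAbs, j.natAbs, Or.inr ⟨?_, ?_⟩⟩ <;> rw [e1, e2] <;> linarith
  · -- i > 0, j ≤ 0 : positive form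
    have e1 : (i.natAbs : ℝ) = (i:ℝ) := by
      rw [natAbs_cast i (i) (by omega)] <;> push_cast <;> ring
    have e2 : (j.natAbs : ℝ) = -(j:ℝ) := by
      rw [natAbs_cast j (-j) (by omega)] <;> push_cast <;> ring
    refine ⟨i.natAbs, j.natAbs, Or.inl ⟨?_, ?_⟩⟩ <;> rw [e1, e2] <;> linarith
  · exfalso
    have h6 : Real.log 2 + Real.log 3 = Real.log 6 := by
      rw [← Real.log_mul] <;> norm_num
    have he : Real.exp 1 < 6 := lt_trans Real.exp_one_lt_d9 (by norm_num)
    have h1 : (1:ℝ) < Real.log 6 := (Real.lt_log_iff_exp_lt (by norm_num)).2 he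
    have : Real.log 2 + Real.log 3 ≤ (i:ℝ) * Real.log 2 + j * Real.log 3 := by
      have : (1:ℝ) ≤ i := by exact_mod_cast hi
      have : (1:ℝ) ≤ j := by exact_mod_cast hj
      nlinarith [log2_pos, log3_pos]
    linarith

private lemma claimA (ε : ℝ) (hε : 0 < ε) (hε2 : ε ≤ 1/2) :
    ∃ n m : ℕ, ((n:ℝ) * Real.log 2 - m * Real.log 3) ∈ Ioo 0 ε := by
  obtain ⟨n, m, h | h⟩ := small_elt ε hε hε2
  · exact ⟨n, m, h⟩
  · set h' : ℝ := (m:ℝ) * Real.log 3 - n * Real.log 2 with hh'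
    have hpos : 0 < h' := by simp only [hh']; obtain ⟨h1, h2⟩ := h; linarith
    have hlt : h' < ε := by simp only [hh']; obtain ⟨h1, h2⟩ := h; linarith
    set k : ℕ := ⌊Real.log 2 / h'⌋₊ with hk
    have hk1 : (k:ℝ) * h' ≤ Real.log 2 := by
      rw [hk]
      have := Nat.floor_le (le_of_lt (div_pos log2_pos hpos))
      calc (⌊Real.log 2 / h'⌋₊ : ℝ) * h' ≤ (Real.log 2 / h') * h' := by
            exact mul_le_mul_of_nonneg_right this hpos.le
        _ = Real.log 2 := div_mul_cancel₀ _ hpos.ne'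
    have hk2 : Real.log 2 < (k:ℝ) * h' + h' := by
      have := Nat.lt_floor_add_one (Real.log 2 / h')
      calc Real.log 2 = (Real.log 2 / h') * h' := (div_mul_cancel₀ _ hpos.ne').symm
        _ < ((k:ℝ) + 1) * h' := by exact mul_lt_mul_of_pos_right (by exact_mod_cast this) hpos
        _ = (k:ℝ) * h' + h' := by ring
    refine ⟨1 + k * n, k * m, ⟨?_, ?_⟩⟩
    · -- value = log 2 - k * h'
      have hval : ((1 + k * n : ℕ):ℝ) * Real.log 2 - ((k * m : ℕ):ℝ) * Real.log 3
          = Real.log 2 - k * h' := by push_cast [hh']; ring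
      rw [hval]
      rcases lt_or_eq_of_le hk1 with h' | heq
      · linarith
      · exfalso
        refine aux_nat (1 + k * n) (k * m) ?_ (Or.inl (by omega))
        push_cast
        simp only [hh'] at heq
        nlinarith [heq]
    · have hval : ((1 + k * n : ℕ):ℝ) * Real.log 2 - ((k * m : ℕ):ℝ) * Real.log 3
          = Real.log 2 - k * h' := by push_cast [hh']; ring
      rw [hval]
      linarith

private lemma claimB (ε : ℝ) (hε : 0 < ε) (hε2 : ε ≤ 1/2) :
    ∃ n m : ℕ, ((n:ℝ) * Real.log 2 - m * Real.log 3) ∈ Ioo (-ε) 0 := by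
  obtain ⟨n, m, h | h⟩ := small_elt ε hε hε2
  · set g : ℝ := (n:ℝ) * Real.log 2 - m * Real.log 3 with hg
    have hpos : 0 < g := h.1
    have hlt : g < ε := h.2
    set k : ℕ := ⌊Real.log 3 / g⌋₊ with hk
    have hk1 : (k:ℝ) * g ≤ Real.log 3 := by
      rw [hk]
      have := Nat.floor_le (le_of_lt (div_pos log3_pos hpos))
      calc (⌊Real.log 3 / g⌋₊ : ℝ) * g ≤ (Real.log 3 / g) * g :=
            mul_le_mul_of_nonneg_right this hpos.le
        _ = Real.log 3 := div_mul_cancel₀ _ hpos.ne'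
    have hk2 : Real.log 3 < (k:ℝ) * g + g := by
      have := Nat.lt_floor_add_one (Real.log 3 / g)
      calc Real.log 3 = (Real.log 3 / g) * g := (div_mul_cancel₀ _ hpos.ne').symm
        _ < ((k:ℝ) + 1) * g := mul_lt_mul_of_pos_right (by exact_mod_cast this) hpos
        _ = (k:ℝ) * g + g := by ring
    have hval : ((k * n : ℕ):ℝ) * Real.log 2 - ((1 + k * m : ℕ):ℝ) * Real.log 3
        = (k:ℝ) * g - Real.log 3 := by push_cast [hg]; ring
    refine ⟨k * n, 1 + k * m, ⟨by rw [hval]; linarith, ?_⟩⟩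
    rw [hval]
    rcases lt_or_eq_of_le hk1 with h' | heq
    · linarith
    · exfalso
      refine aux_nat (k * n) (1 + k * m) ?_ (Or.inr (by omega))
      push_cast
      simp only [hg] at heq
      nlinarith [heq]
  · exact ⟨n, m, h⟩

private lemma log_interval (a b : ℝ) (hab : a < b) :
    ∃ n m : ℕ, ((n:ℝ) * Real.log 2 - m * Real.log 3) ∈ Ioo a b := by
  rcases lt_or_ge a 0 with ha | ha
  · rcases lt_or_ge 0 b with hb | hb
    · exact ⟨0, 0, by simpa using ⟨ha, hb⟩⟩
    · -- a < b ≤ 0, use claimB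
      set ε : ℝ := min (b - a) (1/2) with hε
      have hε0 : 0 < ε := lt_min (by linarith) (by norm_num)
      obtain ⟨n, m, hg1, hg2⟩ := claimB ε hε0 (min_le_right _ _)
      set g : ℝ := (n:ℝ) * Real.log 2 - m * Real.log 3 with hgdef
      set k : ℕ := ⌊b / g⌋₊ + 1 with hk
      have hbg : 0 ≤ b / g := by
        have := div_nonneg (neg_nonneg.2 hb) (neg_nonneg.2 hg2.le)
        rwa [neg_div_neg_eq] at this
      have hk1 : ((k:ℝ) - 1) * g ≥ b := by
        have h1 : (⌊b / g⌋₊ : ℝ) ≤ b / g := Nat.floor_le hbg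
        have : (⌊b / g⌋₊ : ℝ) * g ≥ (b / g) * g := by
          nlinarith [hg2]
        rw [hk]
        push_cast
        rw [div_mul_cancel₀ _ (ne_of_lt hg2)] at this
        linarith
      have hk2 : (k:ℝ) * g < b := by
        have h1 : b / g < (⌊b / g⌋₊ : ℝ) + 1 := Nat.lt_floor_add_one _
        have : (b / g) * g > ((⌊b / g⌋₊ : ℝ) + 1) * g := by nlinarith [hg2]
        rw [div_mul_cancel₀ _ (ne_of_lt hg2)] at this
        rw [hk]; push_cast; linarith
      refine ⟨k * n, k * m, ⟨?_, ?_⟩⟩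
      · have hval : ((k * n : ℕ):ℝ) * Real.log 2 - ((k * m : ℕ):ℝ) * Real.log 3 = k * g := by
          push_cast [hgdef]; ring
        rw [hval]
        have : (k:ℝ) * g = ((k:ℝ) - 1) * g + g := by ring
        rw [this]
        have : ε ≤ b - a := min_le_left _ _
        have := hg1
        linarith
      · have hval : ((k * n : ℕ):ℝ) * Real.log 2 - ((k * m : ℕ):ℝ) * Real.log 3 = k * g := by
          push_cast [hgdef]; ring
        rw [hval]; exact hk2
  · -- 0 ≤ a < b, use claimA
    set ε : ℝ := min (b - a) (1/2) with hε
    have hε0 : 0 < ε := lt_min (by linarith) (by norm_num)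
    obtain ⟨n, m, hg1, hg2⟩ := claimA ε hε0 (min_le_right _ _)
    set g : ℝ := (n:ℝ) * Real.log 2 - m * Real.log 3 with hgdef
    set k : ℕ := ⌊a / g⌋₊ + 1 with hk
    have hag : 0 ≤ a / g := div_nonneg ha hg1.le
    have hk1 : ((k:ℝ) - 1) * g ≤ a := by
      have h1 : (⌊a / g⌋₊ : ℝ) ≤ a / g := Nat.floor_le hag
      have : (⌊a / g⌋₊ : ℝ) * g ≤ (a / g) * g := mul_le_mul_of_nonneg_right h1 hg1.le
      rw [div_mul_cancel₀ _ (ne_of_gt hg1)] at this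
      rw [hk]; push_cast; linarith
    have hk2 : a < (k:ℝ) * g := by
      have h1 : a / g < (⌊a / g⌋₊ : ℝ) + 1 := Nat.lt_floor_add_one _
      have : (a / g) * g < ((⌊a / g⌋₊ : ℝ) + 1) * g := mul_lt_mul_of_pos_right h1 hg1
      rw [div_mul_cancel₀ _ (ne_of_gt hg1)] at this
      rw [hk]; push_cast; linarith
    have hval : ((k * n : ℕ):ℝ) * Real.log 2 - ((k * m : ℕ):ℝ) * Real.log 3 = k * g := by
      push_cast [hgdef]; ring
    refine ⟨k * n, k * m, ⟨by rw [hval]; exact hk2, ?_⟩⟩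
    rw [hval]
    have h3 : ε ≤ b - a := min_le_left _ _
    have : (k:ℝ) * g = ((k:ℝ) - 1) * g + g := by ring
    linarith

private lemma interval_hit (a b : ℝ) (ha : 0 < a) (hab : a < b) :
    ∃ n m : ℕ, a < (2:ℝ)^n / 3^m ∧ (2:ℝ)^n / 3^m < b := by
  obtain ⟨n, m, h1, h2⟩ := log_interval (Real.log a) (Real.log b)
    (Real.log_lt_log ha hab)
  have hx : (0:ℝ) < (2:ℝ)^n / 3^m := by positivity
  have hlx : Real.log ((2:ℝ)^n / 3^m) = (n:ℝ) * Real.log 2 - m * Real.log 3 := by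
    rw [Real.log_div (by positivity) (by positivity), Real.log_pow, Real.log_pow]
  refine ⟨n, m, ?_, ?_⟩
  · rwa [← Real.exp_log ha, ← Real.exp_log hx, Real.exp_lt_exp, hlx]
  · rw [← Real.exp_log (ha.trans hab), ← Real.exp_log hx, Real.exp_lt_exp, hlx]
    exact h2

theorem two_three_dense :
    ∀ y : ℝ, 0 < y →
      y ∈ closure {x : ℝ | ∃ n m : ℕ, x = 2^n / 3^m} := by
  intro y hy
  rw [Metric.mem_closure_iff]
  intro ε hε
  set a : ℝ := max (y - ε/2) (y/2) with ha
  have ha0 : 0 < a := lt_max_of_lt_right (by linarith)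
  have hay : a < y := max_lt (by linarith) (by linarith)
  obtain ⟨n, m, h1, h2⟩ := interval_hit a y ha0 hay
  refine ⟨2^n / 3^m, ⟨n, m, rfl⟩, ?_⟩
  rw [Real.dist_eq, abs_lt]
  constructor
  · linarith
  · have : y - ε/2 ≤ a := le_max_left _ _
    linarith
end

section
/- The determinant of the 3×3 spiral matrix M₃(a,b,c,x,y) with rows (a+b+x+2y, a+b+x+y, a+b+x), (a+b+c+x+2y, a, a+x), (a+b+2c+x+2y, a+b+2c+2x+2y, a+b+2c+3x+2y) equals -(ax + bx + x² + ay + by + 2cy + 2y² + 3xy)·(b+c+2(x+y)), for all elements a, b, c, x, y of a commutative ring. -/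
theorem spiral_det_three {R : Type*} [CommRing R] (a b c x y : R) :
    Matrix.det !![a+b+x+2*y, a+b+x+y, a+b+x;
                  a+b+c+x+2*y, a, a+x;
                  a+b+2*c+x+2*y, a+b+2*c+2*x+2*y, a+b+2*c+3*x+2*y] =
    -((a*x + b*x + x^2 + a*y + b*y + 2*c*y + 2*y^2 + 3*x*y) *
      (b + c + 2*(x+y))) := by
  simp [Matrix.det_fin_three]
  ring
end

section
/- For any field element q ≠ 0, the determinant of the 3×3 matrix with rows (q^{a+b+x+2y}, q^{a+b+x+y}, q^{a+b+x}), (q^{a+b+c+x+2y}, q^{a}, q^{a+x}), (q^{a+b+2c+x+2y}, q^{a+b+2c+2x+2y}, q^{a+b+2c+3x+2y}) equals -q^{3a + 2(b+c+x+y)}·(1 - q^{x+y})·(1 - q^{b+c+2(x+y)}), for all natural number parameters a, b, c, x, y. -/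
theorem q_spiral_det_three {K : Type*} [Field K] (q : K) (hq : q ≠ 0)
    (a b c x y : ℕ) :
    Matrix.det !![q^(a+b+x+2*y), q^(a+b+x+y), q^(a+b+x);
                  q^(a+b+c+x+2*y), q^a, q^(a+x);
                  q^(a+b+2*c+x+2*y), q^(a+b+2*c+2*x+2*y), q^(a+b+2*c+3*x+2*y)] =
    -(q^(3*a + 2*(b+c+x+y)) * (1 - q^(x+y)) * (1 - q^(b+c+2*(x+y)))) := by
  simp [Matrix.det_fin_three, pow_add, pow_mul]
  ring
end

section
/- For nonzero real numbers a, b, c, x, writing [t] = t - 1/t and ⟨t⟩ = t + 1/t, the determinant of the 3×3 matrix with rows ([abx·x²], [abx·x], [abx]), ([abcx·x²], [a], [ax]), ([abc²x·x²], [abc²x²·x²], [abc²x³·x²]) equals -[a²b²c²x⁶]·[x]·[(bc)^{1/2}x²]·⟨a b^{1/2} c^{1/2} x⟩, where b, c > 0 so that the square roots are defined. -/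
set_option maxHeartbeats 4000000 in
theorem z_spiral_det_three (a b c x : ℝ) (ha : a ≠ 0) (hx : x ≠ 0)
    (hb : 0 < b) (hc : 0 < c) :
    Matrix.det !![a*b*x*x^2 - 1/(a*b*x*x^2), a*b*x*x - 1/(a*b*x*x), a*b*x - 1/(a*b*x);
                  a*b*c*x*x^2 - 1/(a*b*c*x*x^2), a - 1/a, a*x - 1/(a*x);
                  a*b*c^2*x*x^2 - 1/(a*b*c^2*x*x^2), a*b*c^2*x^2*x^2 - 1/(a*b*c^2*x^2*x^2),
                    a*b*c^2*x^3*x^2 - 1/(a*b*c^2*x^3*x^2)] =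
    -((a^2*b^2*c^2*x^6 - 1/(a^2*b^2*c^2*x^6)) * (x - 1/x) *
      (Real.sqrt (b*c) * x^2 - 1/(Real.sqrt (b*c) * x^2)) *
      (a * Real.sqrt b * Real.sqrt c * x + 1/(a * Real.sqrt b * Real.sqrt c * x))) := by
  have hbc : Real.sqrt b * Real.sqrt c = Real.sqrt (b*c) :=
    (Real.sqrt_mul hb.le c).symm
  set s := Real.sqrt (b*c) with hs
  have hspos : 0 < s := Real.sqrt_pos.mpr (mul_pos hb hc)
  have hs2 : s^2 = b * c := Real.sq_sqrt (mul_pos hb hc).le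
  have hb0 : b ≠ 0 := hb.ne'
  have hc' : c = s^2 / b := by rw [hs2]; field_simp
  rw [show a * Real.sqrt b * Real.sqrt c = a * s by rw [mul_assoc, hbc],
    Matrix.det_fin_three]
  simp only [Matrix.of_apply, Matrix.cons_val', Matrix.cons_val_zero, Matrix.cons_val_one,
    Matrix.head_cons, Matrix.empty_val', Matrix.cons_val_fin_one, Matrix.head_fin_const,
    Matrix.cons_val_two, Matrix.tail_cons]
  rw [hc']
  have hs0 : s ≠ 0 := hspos.ne'
  field_simp
  ring
end
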